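/- Let H be a real Hilbert space, m ≥ 2, C_1,…,C_m nonempty closed convex subsets of H, C = C_1 × ⋯ × C_m ⊆ H^m, D the diagonal of H^m, and suppose y ∈ H minimizes φ(y) = ∑ dist(y, C_i)². Then x = P_C(y,…,y) is a fixed point of P_C ∘ P_D, and consequently x minimizes Φ(y_1,…,y_m) = ∑_{i<j} ‖y_i - y_j‖² over C. -/

import Mathlib

open RealInnerProductSpace Finset

lemma aux_expand {H : Type*} [NormedAddCommGroup H] [InnerProductSpace ℝ H]
    {m : ℕ} (c : H) (b : Fin m → H) (hb : ∑ i, b i = 0) :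
    ∑ i, ‖c + b i‖ ^ 2 = (m : ℝ) * ‖c‖ ^ 2 + ∑ i, ‖b i‖ ^ 2 := by
  have h : ∀ i, ‖c + b i‖ ^ 2 = ‖c‖ ^ 2 + 2 * ⟪c, b i⟫ + ‖b i‖ ^ 2 :=
    fun i => norm_add_sq_real c (b i)
  simp only [h, Finset.sum_add_distrib, ← Finset.mul_sum, ← inner_sum, hb, inner_zero_right,
    Finset.sum_const, Finset.card_univ, Fintype.card_fin, nsmul_eq_mul, mul_zero, add_zero]

lemma aux_key {H : Type*} [NormedAddCommGroup H] [InnerProductSpace ℝ H]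
    {m : ℕ} (a : Fin m → H) (ha : ∑ i, a i = 0) :
    (∑ i, ∑ j, if i < j then ‖a i - a j‖ ^ 2 else 0 : ℝ) = m * ∑ i, ‖a i‖ ^ 2 := by
  have hfull : (∑ i, ∑ j, ‖a i - a j‖ ^ 2 : ℝ) = 2 * (m * ∑ i, ‖a i‖ ^ 2) := by
    have h : ∀ i j : Fin m, ‖a i - a j‖ ^ 2 = ‖a i‖ ^ 2 - 2 * ⟪a i, a j⟫ + ‖a j‖ ^ 2 :=
      fun i j => norm_sub_sq_real (a i) (a j)
    simp only [h, Finset.sum_add_distrib, Finset.sum_sub_distrib, ← Finset.mul_sum,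
      ← inner_sum, ha, inner_zero_right, mul_zero, sub_zero, Finset.sum_const,
      Finset.card_univ, Fintype.card_fin, nsmul_eq_mul]
    ring
  have hsym : (∑ i, ∑ j, if j < i then ‖a i - a j‖ ^ 2 else 0 : ℝ)
      = ∑ i, ∑ j, if i < j then ‖a i - a j‖ ^ 2 else 0 := by
    rw [Finset.sum_comm]
    congr 1; ext i; congr 1; ext j
    rw [norm_sub_rev]
  have hdiag : (∑ i, ∑ j, if i = j then ‖a i - a j‖ ^ 2 else 0 : ℝ) = 0 := by
    apply Finset.sum_eq_zero; intro i _
    apply Finset.sum_eq_zero; intro j _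
    split
    · next h => simp [h]
    · rfl
  have hsplit : (∑ i, ∑ j, ‖a i - a j‖ ^ 2 : ℝ)
      = (∑ i, ∑ j, if i < j then ‖a i - a j‖ ^ 2 else 0)
        + (∑ i, ∑ j, if j < i then ‖a i - a j‖ ^ 2 else 0)
        + (∑ i, ∑ j, if i = j then ‖a i - a j‖ ^ 2 else 0) := by
    simp only [← Finset.sum_add_distrib]
    congr 1; ext i; congr 1; ext j
    rcases lt_trichotomy i j with h | h | h
    · simp [h, h.ne, lt_asymm h]
    · simp [h]
    · simp [h, h.ne', lt_asymm h]
  rw [hsplit, hsym, hdiag, add_zero] at hfull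
  linarith

/-- `p` is the metric projection of `x` onto `C`. -/
def IsProj {E : Type*} [NormedAddCommGroup E] (C : Set E) (x p : E) : Prop :=
  p ∈ C ∧ ∀ y ∈ C, ‖x - p‖ ≤ ‖x - y‖

theorem minimizer_gives_fixed_point_and_Phi_minimum
    {H : Type*} [NormedAddCommGroup H] [InnerProductSpace ℝ H] [CompleteSpace H]
    (m : ℕ) (hm : 2 ≤ m) (C : Fin m → Set H)
    (hne : ∀ i, (C i).Nonempty) (hcl : ∀ i, IsClosed (C i)) (hconv : ∀ i, Convex ℝ (C i))
    (y : H)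
    (hy : ∀ w : H, ∑ i : Fin m, (Metric.infDist y (C i)) ^ 2 ≤
      ∑ i : Fin m, (Metric.infDist w (C i)) ^ 2)
    (x : Fin m → H) (hx : ∀ i, IsProj (C i) y (x i)) :
    (∀ i, IsProj (C i) ((m : ℝ)⁻¹ • ∑ j : Fin m, x j) (x i)) ∧
    (∀ i, x i ∈ C i) ∧
    ∀ z : Fin m → H, (∀ i, z i ∈ C i) →
      (∑ i : Fin m, ∑ j : Fin m, if i < j then ‖x i - x j‖ ^ 2 else 0) ≤
        ∑ i : Fin m, ∑ j : Fin m, if i < j then ‖z i - z j‖ ^ 2 else 0 := by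
  have hmpos : (0 : ℝ) < m := by
    have : (0:ℕ) < m := by omega
    exact_mod_cast this
  have hm0 : (m : ℝ) ≠ 0 := ne_of_gt hmpos
  set xb : H := (m : ℝ)⁻¹ • ∑ j : Fin m, x j with hxb
  have hmem : ∀ i, x i ∈ C i := fun i => (hx i).1
  have hdistx : ∀ (w : H) i, Metric.infDist w (C i) ≤ ‖w - x i‖ := by
    intro w i
    simpa [dist_eq_norm] using Metric.infDist_le_dist_of_mem (hmem i)
  have hA : ∀ i, Metric.infDist y (C i) = ‖y - x i‖ := by
    intro i
    refine le_antisymm (hdistx y i) ?_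
    rw [Metric.infDist_eq_iInf]
    haveI := (hne i).to_subtype
    refine le_ciInf fun c => ?_
    simpa [dist_eq_norm] using (hx i).2 c c.2
  -- sum of deviations from the barycenter vanishes
  have hmsmul : (m : ℝ) • xb = ∑ j : Fin m, x j := by
    rw [hxb, smul_smul, mul_inv_cancel₀ hm0, one_smul]
  have hsum0 : ∑ i : Fin m, (xb - x i) = 0 := by
    rw [Finset.sum_sub_distrib, Finset.sum_const, Finset.card_univ, Fintype.card_fin,
      ← Nat.cast_smul_eq_nsmul ℝ, hmsmul, sub_self]
  have hexp : ∀ w : H, ∑ i : Fin m, ‖w - x i‖ ^ 2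
      = (m : ℝ) * ‖w - xb‖ ^ 2 + ∑ i : Fin m, ‖xb - x i‖ ^ 2 := by
    intro w
    have h : ∀ i, w - x i = (w - xb) + (xb - x i) := fun i => by abel
    simp_rw [h]
    exact aux_expand (w - xb) (fun i => xb - x i) hsum0
  -- minimality forces y = xb
  have hphiy : ∑ i : Fin m, Metric.infDist y (C i) ^ 2 = ∑ i : Fin m, ‖y - x i‖ ^ 2 := by
    simp_rw [hA]
  have hphib : ∑ i : Fin m, Metric.infDist xb (C i) ^ 2 ≤ ∑ i : Fin m, ‖xb - x i‖ ^ 2 :=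
    Finset.sum_le_sum fun i _ => pow_le_pow_left₀ Metric.infDist_nonneg (hdistx xb i) 2
  have hchain : ∑ i : Fin m, ‖y - x i‖ ^ 2 ≤ ∑ i : Fin m, ‖xb - x i‖ ^ 2 :=
    hphiy ▸ le_trans (hy xb) hphib
  have hyxb : y = xb := by
    have h1 := hexp y
    have hsq : (m : ℝ) * ‖y - xb‖ ^ 2 ≤ 0 := by linarith
    have h2 : ‖y - xb‖ ^ 2 ≤ 0 := nonpos_of_mul_nonpos_right ?_ hmpos
    · have h3 : ‖y - xb‖ ^ 2 = 0 := le_antisymm h2 (by positivity)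
      have h4 : ‖y - xb‖ = 0 := sq_eq_zero_iff.mp h3
      rw [← sub_eq_zero]
      exact norm_eq_zero.mp h4
    · linarith [mul_comm (m : ℝ) (‖y - xb‖ ^ 2)]
  refine ⟨fun i => hyxb ▸ hx i, hmem, ?_⟩
  intro z hz
  set zb : H := (m : ℝ)⁻¹ • ∑ j : Fin m, z j with hzb
  have hzsum0 : ∑ i : Fin m, (z i - zb) = 0 := by
    rw [Finset.sum_sub_distrib, Finset.sum_const, Finset.card_univ, Fintype.card_fin,
      ← Nat.cast_smul_eq_nsmul ℝ, hzb, smul_smul, mul_inv_cancel₀ hm0, one_smul, sub_self]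
  have hxsum0 : ∑ i : Fin m, (x i - y) = 0 := by
    have := hsum0
    rw [hyxb]
    have h : ∀ i : Fin m, x i - xb = -(xb - x i) := fun i => by abel
    simp_rw [h, Finset.sum_neg_distrib, hsum0, neg_zero]
  have hL : (∑ i : Fin m, ∑ j : Fin m, if i < j then ‖x i - x j‖ ^ 2 else 0)
      = m * ∑ i : Fin m, ‖x i - y‖ ^ 2 := by
    have h : ∀ i j : Fin m, x i - x j = (x i - y) - (x j - y) := fun i j => by abel
    simp_rw [h]
    exact aux_key (fun i => x i - y) hxsum0
  have hR : (∑ i : Fin m, ∑ j : Fin m, if i < j then ‖z i - z j‖ ^ 2 else 0)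
      = m * ∑ i : Fin m, ‖z i - zb‖ ^ 2 := by
    have h : ∀ i j : Fin m, z i - z j = (z i - zb) - (z j - zb) := fun i j => by abel
    simp_rw [h]
    exact aux_key (fun i => z i - zb) hzsum0
  rw [hL, hR]
  apply mul_le_mul_of_nonneg_left _ (le_of_lt hmpos)
  have hstep : ∑ i : Fin m, ‖x i - y‖ ^ 2 ≤ ∑ i : Fin m, Metric.infDist zb (C i) ^ 2 := by
    calc ∑ i : Fin m, ‖x i - y‖ ^ 2 = ∑ i : Fin m, ‖y - x i‖ ^ 2 := by
          simp_rw [norm_sub_rev]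
      _ = ∑ i : Fin m, Metric.infDist y (C i) ^ 2 := hphiy.symm
      _ ≤ ∑ i : Fin m, Metric.infDist zb (C i) ^ 2 := hy zb
  refine le_trans hstep (Finset.sum_le_sum fun i _ => ?_)
  have h1 : Metric.infDist zb (C i) ≤ ‖z i - zb‖ := by
    have := Metric.infDist_le_dist_of_mem (s := C i) (x := zb) (hz i)
    rwa [dist_eq_norm, norm_sub_rev] at this
  exact pow_le_pow_left₀ Metric.infDist_nonneg h1 2
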